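/- Lemma 2.1 (dual prox-mapping equals a gradient computation): Let f : ℝⁿ → ℝ be convex and differentiable with L_f-Lipschitz gradient, and let J_f denote its Fenchel conjugate J_f(g) = sup_{x∈ℝⁿ} (⟨x, g⟩ − f(x)). Let x̃ ∈ ℝⁿ, let g^0 ∈ ℝⁿ and x^0 ∈ ℝⁿ satisfy x^0 ∈ ∂J_f(g^0) (equivalently g^0 = ∇f(x^0)), define D_f(g^0, g) := J_f(g) − J_f(g^0) − ⟨x^0, g − g^0⟩, let τ > 0, and set z = (x̃ + τ x^0)/(1 + τ). Then ∇f(z) is a minimizer over all g with J_f(g) < +∞ of the function g ↦ ⟨−x̃, g⟩ + J_f(g) + τ·D_f(g^0, g). -/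

import Mathlib

open scoped RealInnerProductSpace

/-- Gradient inequality for convex functions: `f u ≥ f z + ⟪∇f z, u - z⟫`. -/
lemma grad_ineq {n : ℕ} (f : EuclideanSpace ℝ (Fin n) → ℝ)
    (hfconv : ConvexOn ℝ Set.univ f)
    (z gz : EuclideanSpace ℝ (Fin n)) (hgz : HasGradientAt f gz z)
    (u : EuclideanSpace ℝ (Fin n)) :
    f z + ⟪gz, u - z⟫ ≤ f u := by
  set c : ℝ → EuclideanSpace ℝ (Fin n) := fun t => z + t • (u - z) with hc
  have hc0 : c 0 = z := by simp [hc]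
  have hc1 : c 1 = u := by simp [hc]
  have hder : HasDerivAt c (u - z) 0 := by
    simpa [hc] using ((hasDerivAt_id (0 : ℝ)).smul_const (u - z)).const_add z
  have hφ : HasDerivAt (f ∘ c) ⟪gz, u - z⟫ 0 := by
    have hgz' : HasFDerivAt f ((InnerProductSpace.toDual ℝ _) gz) (c 0) :=
      hc0.symm ▸ hgz.hasFDerivAt
    simpa using (hgz'.comp_hasDerivAt (0 : ℝ) hder)
  have hφconv : ConvexOn ℝ Set.univ (f ∘ c) := by
    constructor
    · exact convex_univ
    · intro s _ t _ a b ha hb hab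
      have hcomb : c (a * s + b * t) = a • c s + b • c t := by
        have hb' : b = 1 - a := by linarith
        subst hb'
        simp only [hc]
        module
      have := hfconv.2 (Set.mem_univ (c s)) (Set.mem_univ (c t)) ha hb hab
      simp only [Function.comp, smul_eq_mul, hcomb]
      exact this
  have := hφconv.le_slope_of_hasDerivAt (Set.mem_univ (0:ℝ)) (Set.mem_univ (1:ℝ))
    (by norm_num) hφ
  rw [slope_def_field] at this
  simp only [hc0, hc1, Function.comp] at this
  -- this : ⟪gz, u - z⟫ ≤ (f u - f z) / (1 - 0)
  nlinarith [this]

theorem dual_prox_is_gradient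
    {n : ℕ}
    (f : EuclideanSpace ℝ (Fin n) → ℝ)
    (f' : EuclideanSpace ℝ (Fin n) → EuclideanSpace ℝ (Fin n))
    (Lf : ℝ) (hLf : 0 ≤ Lf)
    (hfconv : ConvexOn ℝ Set.univ f)
    (hfdiff : ∀ u, HasGradientAt f (f' u) u)
    (hfLip : ∀ u v, ‖f' u - f' v‖ ≤ Lf * ‖u - v‖)
    (J : EuclideanSpace ℝ (Fin n) → ℝ)
    (hJ : ∀ g, J g = ⨆ u, (⟪u, g⟫ - f u))
    (xtil x0 g0 : EuclideanSpace ℝ (Fin n)) (hg0 : g0 = f' x0)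
    (D : EuclideanSpace ℝ (Fin n) → ℝ)
    (hD : ∀ g, D g = J g - J g0 - ⟪x0, g - g0⟫)
    (τ : ℝ) (hτ : 0 < τ)
    (z : EuclideanSpace ℝ (Fin n)) (hz : z = (1 + τ)⁻¹ • (xtil + τ • x0)) :
    BddAbove (Set.range fun u => ⟪u, f' z⟫ - f u) ∧
    ∀ g, BddAbove (Set.range fun u => ⟪u, g⟫ - f u) →
      ⟪-xtil, f' z⟫ + J (f' z) + τ * D (f' z) ≤ ⟪-xtil, g⟫ + J g + τ * D g := by
  have hbound : ∀ u, ⟪u, f' z⟫ - f u ≤ ⟪z, f' z⟫ - f z := by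
    intro u
    have := grad_ineq f hfconv z (f' z) (hfdiff z) u
    have h2 : ⟪f' z, u - z⟫ = ⟪u, f' z⟫ - ⟪z, f' z⟫ := by
      rw [inner_sub_right, real_inner_comm (f' z) u, real_inner_comm (f' z) z]
    linarith [this, h2.le, h2.ge]
  have hbdd : BddAbove (Set.range fun u => ⟪u, f' z⟫ - f u) := by
    refine ⟨⟪z, f' z⟫ - f z, ?_⟩
    rintro y ⟨u, rfl⟩
    exact hbound u
  refine ⟨hbdd, ?_⟩
  intro g hbddg
  -- value of J at f' z
  have hJz : J (f' z) = ⟪z, f' z⟫ - f z := by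
    rw [hJ]
    exact le_antisymm (ciSup_le hbound) (le_ciSup hbdd z)
  -- Fenchel-Young at z for g
  have hFY : ⟪z, g⟫ - f z ≤ J g := by
    rw [hJ]; exact le_ciSup hbddg z
  -- z relation: (1+τ) • z = xtil + τ • x0
  have h1τ : (0:ℝ) < 1 + τ := by linarith
  have hzrel : (1 + τ) • z = xtil + τ • x0 := by
    rw [hz, smul_smul, mul_inv_cancel₀ (ne_of_gt h1τ), one_smul]
  have hzin : ∀ w : EuclideanSpace ℝ (Fin n), ⟪xtil, w⟫ + τ * ⟪x0, w⟫ = (1 + τ) * ⟪z, w⟫ := by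
    intro w
    have : ⟪(1 + τ) • z, w⟫ = ⟪xtil + τ • x0, w⟫ := by rw [hzrel]
    rw [inner_add_left, real_inner_smul_left, real_inner_smul_left] at this
    linarith [this.le, this.ge]
  -- key inequality: (1+τ)(J(f'z) - ⟪z, f'z⟫) ≤ (1+τ)(J g - ⟪z, g⟫)
  have hkey : J (f' z) - ⟪z, f' z⟫ ≤ J g - ⟪z, g⟫ := by
    rw [hJz]; linarith [hFY]
  simp only [hD, inner_sub_right, inner_neg_left]
  have e1 := hzin (f' z)
  have e2 := hzin g
  nlinarith [mul_le_mul_of_nonneg_left hkey (le_of_lt h1τ)]
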